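/- Every element of B_n other than c^{-1} has at most 2n-2 antiexceedances, where c is the 2n-cycle (-1, -2, ..., -n, 1, 2, ..., n). -/
import Mathlib


/- We model `±[n]` by `Fin (2*n)`: index `k < n` represents `-(k+1)`, index `n + k`
represents `k+1`; the order on `Fin (2*n)` is `-1 ≺ ⋯ ≺ -n ≺ 1 ≺ ⋯ ≺ n`.
Negation is addition of `n` mod `2n`, i.e. the permutation `(finRotate (2*n))^n`. -/

/-- Negation on `±[n]`, as a permutation of `Fin (2*n)`. -/
def negPerm (n : ℕ) : Equiv.Perm (Fin (2 * n)) := (finRotate (2 * n)) ^ n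

/-- `w` is a signed permutation (element of `B_n`): `w(-i) = -w(i)`. -/
def isSigned (n : ℕ) (w : Equiv.Perm (Fin (2 * n))) : Prop :=
  ∀ i, w (negPerm n i) = negPerm n (w i)

/-- The set of antiexceedances: elements `i` with `i < w⁻¹ i`. -/
def aexc {m : ℕ} (w : Equiv.Perm (Fin m)) : Finset (Fin m) :=
  Finset.univ.filter fun i => i < w⁻¹ i

/-- If a permutation of `Fin m` increases every element except the last, it is `finRotate m`. -/
lemma perm_eq_finRotate {m : ℕ} (σ : Equiv.Perm (Fin m))
    (h : ∀ i : Fin m, (i : ℕ) + 1 < m → i < σ i) : σ = finRotate m := by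
  cases m with
  | zero => exact Equiv.ext fun i => i.elim0
  | succ m' =>
    set L : Fin (m' + 1) := Fin.last m' with hL
    have hsum : ∑ i : Fin (m' + 1), ((σ i : ℕ)) = ∑ i : Fin (m' + 1), (i : ℕ) :=
      Equiv.sum_comp σ _
    have hle : ∀ i ∈ Finset.univ.erase L, (i : ℕ) + 1 ≤ (σ i : ℕ) := by
      intro i hi
      have hiL : i ≠ L := Finset.ne_of_mem_erase hi
      have : (i : ℕ) + 1 < m' + 1 := by
        have := Fin.val_lt_last hiL
        omega
      exact h i this
    have hsplit : ∀ (f : Fin (m' + 1) → ℕ),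
        ∑ i : Fin (m' + 1), f i = f L + ∑ i ∈ Finset.univ.erase L, f i := by
      intro f
      rw [← Finset.add_sum_erase _ f (Finset.mem_univ L)]
    have hcard : (Finset.univ.erase L).card = m' := by
      simp [Finset.card_erase_of_mem]
    -- sum over erase of (i+1) equals sum over erase of i plus m'
    have h1 : ∑ i ∈ Finset.univ.erase L, ((i : ℕ) + 1)
        = (∑ i ∈ Finset.univ.erase L, (i : ℕ)) + m' := by
      rw [Finset.sum_add_distrib, Finset.sum_const, hcard, smul_eq_mul, mul_one]
    have h2 := hsplit (fun i => (i : ℕ))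
    have h3 := hsplit (fun i => (σ i : ℕ))
    have hLval : (L : ℕ) = m' := rfl
    have hge : ∑ i ∈ Finset.univ.erase L, ((i : ℕ) + 1)
        ≤ ∑ i ∈ Finset.univ.erase L, (σ i : ℕ) := Finset.sum_le_sum hle
    -- conclude σ L = 0 and equality of sums
    have hσL : (σ L : ℕ) = 0 := by omega
    have heq : ∑ i ∈ Finset.univ.erase L, ((i : ℕ) + 1)
        = ∑ i ∈ Finset.univ.erase L, (σ i : ℕ) := by omega
    have hpt : ∀ i ∈ Finset.univ.erase L, (i : ℕ) + 1 = (σ i : ℕ) :=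
      (Finset.sum_eq_sum_iff_of_le hle).mp heq
    ext i
    rcases eq_or_ne i L with rfl | hi
    · have : finRotate (m' + 1) L = 0 := by
        simp [hL, finRotate_succ_apply]
      rw [this]
      simp [hσL]
    · have hv : (σ i : ℕ) = (i : ℕ) + 1 := (hpt i (Finset.mem_erase.mpr ⟨hi, Finset.mem_univ i⟩)).symm
      have : finRotate (m' + 1) i = i + 1 := finRotate_succ_apply i
      rw [this]
      simp [hv, Fin.val_add_one, show i ≠ Fin.last m' from hi]

/-- Every element of `B_n` other than `c⁻¹` has at most `2n - 2` antiexceedances,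
where `c` is the `2n`-cycle `(-1, -2, …, -n, 1, …, n)` (i.e. `finRotate (2*n)`). -/
theorem aexc_B_le_of_ne (n : ℕ) (hn : 1 ≤ n) (w : Equiv.Perm (Fin (2 * n)))
    (hw : isSigned n w) (hne : w ≠ (finRotate (2 * n))⁻¹) :
    (aexc w).card ≤ 2 * n - 2 := by
  by_contra hcard
  push_neg at hcard
  set L : Fin (2 * n) := ⟨2 * n - 1, by omega⟩ with hLdef
  have hLmax : ∀ i : Fin (2 * n), i ≤ L := by
    intro i
    have := i.isLt
    exact Fin.le_def.mpr (by simp [hLdef]; omega)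
  have hsub : aexc w ⊆ Finset.univ.erase L := by
    intro i hi
    simp only [aexc, Finset.mem_filter] at hi
    refine Finset.mem_erase.mpr ⟨?_, Finset.mem_univ i⟩
    rintro rfl
    exact absurd (hLmax (w⁻¹ L)) (not_le_of_gt hi.2)
  have hcardE : (Finset.univ.erase L).card = 2 * n - 1 := by
    simp [Finset.card_erase_of_mem]
  have hcard' : (Finset.univ.erase L).card ≤ (aexc w).card := by
    have := Finset.card_le_card hsub
    omega
  have heq : aexc w = Finset.univ.erase L := Finset.eq_of_subset_of_card_le hsub hcard'
  have hkey : ∀ i : Fin (2 * n), (i : ℕ) + 1 < 2 * n → i < w⁻¹ i := by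
    intro i hi
    have hiL : i ≠ L := by
      intro h
      rw [h] at hi
      simp [hLdef] at hi
      omega
    have : i ∈ aexc w := by
      rw [heq]
      exact Finset.mem_erase.mpr ⟨hiL, Finset.mem_univ i⟩
    simpa [aexc] using this
  have : w⁻¹ = finRotate (2 * n) := perm_eq_finRotate w⁻¹ hkey
  apply hne
  rw [← this, inv_inv]
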